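/- Let K be a perfectoid field and let R, R^♭ be a perfectoid K-algebra and its tilt. Then R is a perfectoid field if and only if R^♭ is a perfectoid field. In particular, the spectral norm ||x||_R = inf{|t|^{-1} : t ∈ K^×, tx ∈ R°} satisfies ||x||_{R^♭} = ||x^♯||_R for x ∈ R^♭, and multiplicativity of one spectral norm implies multiplicativity of the other. -/

import Mathlib

open Filter Topology

/-- An element of a normed ring is power-bounded. -/
def PowerBounded {R : Type*} [SeminormedRing R] (x : R) : Prop :=
  ∃ C : ℝ, ∀ n : ℕ, ‖x ^ n‖ ≤ C

/-- A perfectoid field, encoded as a complete nontrivially normed (multiplicative, i.e.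
rank-1) ultrametric field whose norm is nondiscrete and such that Frobenius is surjective
on `K°/p`.  (Completeness is imposed separately via `CompleteSpace K`.) -/
def IsPerfectoidNormedField (K : Type*) [NontriviallyNormedField K] (p : ℕ) : Prop :=
  IsUltrametricDist K ∧
  (¬ ∃ γ : ℝ, ∀ x : K, x ≠ 0 → ∃ n : ℤ, ‖x‖ = γ ^ n) ∧
  ‖(p : K)‖ < 1 ∧
  (∀ x : K, ‖x‖ ≤ 1 → ∃ y : K, ‖y‖ ≤ 1 ∧ ‖x - y ^ p‖ ≤ ‖(p : K)‖)

/-- A perfectoid `K`-algebra: a Banach `K`-algebra (completeness imposed separately)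
such that the set `R°` of power-bounded elements is open and bounded, and Frobenius is
surjective on `R°/ϖ`. -/
def IsPerfectoidAlgebra (K : Type*) (R : Type*) [NontriviallyNormedField K]
    [NormedCommRing R] [NormedAlgebra K R] (p : ℕ) (ϖ : K) : Prop :=
  IsOpen {x : R | PowerBounded x} ∧
  (∃ C : ℝ, ∀ x : R, PowerBounded x → ‖x‖ ≤ C) ∧
  (∀ x : R, PowerBounded x →
    ∃ y z : R, PowerBounded y ∧ PowerBounded z ∧ x - y ^ p = algebraMap K R ϖ * z)

/-- The spectral norm `‖x‖_R = inf {‖t‖⁻¹ : t ∈ K^×, t x ∈ R°}` on a `K`-algebra `R`. -/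
noncomputable def spectralNrm (K : Type u) (R : Type v) [NontriviallyNormedField K]
    [NormedCommRing R] [NormedAlgebra K R] (x : R) : ℝ :=
  sInf {r : ℝ | ∃ t : K, t ≠ 0 ∧ r = ‖t‖⁻¹ ∧ PowerBounded (algebraMap K R t * x)}


/-- The spectral radius (power-multiplicative seminorm) attached to the norm. -/
noncomputable def rad {R : Type*} [NormedCommRing R] (x : R) : ℝ :=
  sInf {r : ℝ | ∃ n : ℕ, r = ‖x ^ (n + 1)‖ ^ ((n + 1 : ℝ))⁻¹}

section radBasic

variable {R : Type*} [NormedCommRing R]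

lemma radSet_nonempty (x : R) :
    {r : ℝ | ∃ n : ℕ, r = ‖x ^ (n + 1)‖ ^ ((n + 1 : ℝ))⁻¹}.Nonempty := ⟨_, 0, rfl⟩

lemma radSet_bdd (x : R) :
    BddBelow {r : ℝ | ∃ n : ℕ, r = ‖x ^ (n + 1)‖ ^ ((n + 1 : ℝ))⁻¹} := by
  refine ⟨0, ?_⟩
  rintro r ⟨n, rfl⟩
  positivity

lemma rad_nonneg (x : R) : 0 ≤ rad x := by
  refine le_csInf (radSet_nonempty x) ?_
  rintro r ⟨n, rfl⟩
  positivity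

lemma rad_le_rpow (x : R) (n : ℕ) : rad x ≤ ‖x ^ (n + 1)‖ ^ ((n + 1 : ℝ))⁻¹ :=
  csInf_le (radSet_bdd x) ⟨n, rfl⟩

lemma cast_succ_ne (n : ℕ) : ((n : ℝ) + 1) ≠ 0 := by positivity

lemma pow_rad_le {x : R} {m : ℕ} (hm : m ≠ 0) : rad x ^ m ≤ ‖x ^ m‖ := by
  obtain ⟨n, rfl⟩ := Nat.exists_eq_succ_of_ne_zero hm
  calc rad x ^ (n + 1) ≤ (‖x ^ (n + 1)‖ ^ ((n + 1 : ℝ))⁻¹) ^ (n + 1) :=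
        pow_le_pow_left₀ (rad_nonneg x) (rad_le_rpow x n) _
    _ = ‖x ^ (n + 1)‖ := by
        rw [show ((n:ℝ) + 1) = ((n + 1 : ℕ) : ℝ) by push_cast; ring]
        exact Real.rpow_inv_natCast_pow (norm_nonneg _) (Nat.succ_ne_zero n)

lemma rad_le_of_pow_le {x : R} {c : ℝ} (hc : 0 ≤ c) {m : ℕ} (hm : m ≠ 0)
    (h : ‖x ^ m‖ ≤ c ^ m) : rad x ≤ c := by
  obtain ⟨n, rfl⟩ := Nat.exists_eq_succ_of_ne_zero hm
  refine (rad_le_rpow x n).trans ?_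
  rw [show ((n:ℝ) + 1) = ((n + 1 : ℕ) : ℝ) by push_cast; ring]
  calc ‖x ^ (n + 1)‖ ^ (((n + 1 : ℕ) : ℝ))⁻¹ ≤ (c ^ (n + 1)) ^ (((n + 1 : ℕ) : ℝ))⁻¹ :=
        Real.rpow_le_rpow (norm_nonneg _) h (by positivity)
    _ = c := Real.pow_rpow_inv_natCast hc (Nat.succ_ne_zero n)

lemma rad_exists_pow_lt {x : R} {c : ℝ} (h : rad x < c) :
    ∃ m : ℕ, m ≠ 0 ∧ ‖x ^ m‖ < c ^ m := by
  obtain ⟨r, ⟨n, rfl⟩, hr⟩ := (csInf_lt_iff (radSet_bdd x) (radSet_nonempty x)).mp h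
  refine ⟨n + 1, Nat.succ_ne_zero n, ?_⟩
  have h0 : (0:ℝ) ≤ ‖x ^ (n + 1)‖ ^ ((n + 1 : ℝ))⁻¹ := by positivity
  calc ‖x ^ (n + 1)‖ = (‖x ^ (n + 1)‖ ^ ((n + 1 : ℝ))⁻¹) ^ (n + 1) := by
        rw [show ((n:ℝ) + 1) = ((n + 1 : ℕ) : ℝ) by push_cast; ring]
        exact (Real.rpow_inv_natCast_pow (norm_nonneg _) (Nat.succ_ne_zero n)).symm
    _ < c ^ (n + 1) := pow_lt_pow_left₀ hr h0 (Nat.succ_ne_zero n)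

lemma rad_le_norm (x : R) : rad x ≤ ‖x‖ := by
  have := rad_le_rpow x 0
  simpa using this

lemma rad_zero : rad (0 : R) = 0 :=
  le_antisymm (rad_le_of_pow_le le_rfl one_ne_zero (by simp)) (rad_nonneg 0)

lemma rad_congr {S : Type*} [NormedCommRing S] {x : R} {y : S}
    (h : ∀ n : ℕ, n ≠ 0 → ‖y ^ n‖ = ‖x ^ n‖) : rad y = rad x := by
  unfold rad
  congr 1
  ext r
  constructor
  · rintro ⟨n, rfl⟩; exact ⟨n, by rw [h (n + 1) (Nat.succ_ne_zero n)]⟩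
  · rintro ⟨n, rfl⟩; exact ⟨n, by rw [h (n + 1) (Nat.succ_ne_zero n)]⟩

lemma rad_neg (x : R) : rad (-x) = rad x := by
  refine rad_congr fun n hn => ?_
  rcases Nat.even_or_odd n with h | h
  · rw [h.neg_pow]
  · rw [h.neg_pow, norm_neg]

lemma powerBounded_of_rad_lt_one {x : R} (h : rad x < 1) : PowerBounded x := by
  obtain ⟨m, hm, hx⟩ := rad_exists_pow_lt h
  rw [one_pow] at hx
  have hm0 : 0 < m := Nat.pos_of_ne_zero hm
  refine ⟨(Finset.range m).sup' (Finset.nonempty_range_iff.mpr hm) (fun r => ‖x ^ r‖), fun n => ?_⟩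
  induction n using Nat.strong_induction_on with
  | _ n ih =>
    rcases lt_or_ge n m with h' | h'
    · exact Finset.le_sup' (fun r => ‖x ^ r‖) (Finset.mem_range.mpr h')
    · have hnm : n - m < n := Nat.sub_lt (lt_of_lt_of_le hm0 h') hm0
      have hsplit : x ^ n = x ^ m * x ^ (n - m) := by
        rw [← pow_add]; congr 1; omega
      calc ‖x ^ n‖ ≤ ‖x ^ m‖ * ‖x ^ (n - m)‖ := hsplit ▸ norm_mul_le _ _
        _ ≤ 1 * _ := mul_le_mul hx.le (ih _ hnm) (norm_nonneg _) zero_le_one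
        _ = _ := one_mul _

lemma rad_le_one_of_powerBounded {x : R} (h : PowerBounded x) : rad x ≤ 1 := by
  by_contra hc
  push_neg at hc
  obtain ⟨C, hC⟩ := h
  obtain ⟨n, hn1, hn2⟩ := ((tendsto_pow_atTop_atTop_of_one_lt hc).eventually_gt_atTop C).and
    (eventually_ge_atTop 1) |>.exists
  exact absurd ((pow_rad_le (by omega : n ≠ 0)).trans (hC n)) (not_le.mpr hn1)

lemma rad_one_le : rad (1 : R) ≤ 1 :=
  rad_le_one_of_powerBounded ⟨‖(1 : R)‖, fun n => by rw [one_pow]⟩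

lemma rad_pow_ge {x : R} {m : ℕ} (hm : m ≠ 0) : rad x ^ m ≤ rad (x ^ m) := by
  refine le_csInf (radSet_nonempty _) ?_
  rintro r ⟨n, rfl⟩
  have h1 : (rad x ^ m) ^ (n + 1) ≤ ‖(x ^ m) ^ (n + 1)‖ := by
    rw [← pow_mul, ← pow_mul]
    exact pow_rad_le (by positivity)
  calc rad x ^ m
      = ((rad x ^ m) ^ (n + 1)) ^ (((n + 1 : ℕ) : ℝ))⁻¹ :=
        (Real.pow_rpow_inv_natCast (pow_nonneg (rad_nonneg x) m) (Nat.succ_ne_zero n)).symm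
    _ ≤ ‖(x ^ m) ^ (n + 1)‖ ^ (((n + 1 : ℕ) : ℝ))⁻¹ :=
        Real.rpow_le_rpow (pow_nonneg (pow_nonneg (rad_nonneg x) m) _) h1 (by positivity)
    _ = ‖(x ^ m) ^ (n + 1)‖ ^ ((n + 1 : ℝ))⁻¹ := by norm_num

end radBasic

section radAlgebra

variable {K : Type*} [NontriviallyNormedField K] {R : Type*} [NormedCommRing R]
  [NormedAlgebra K R]

lemma norm_algebraMap_mul_pow (t : K) (x : R) (n : ℕ) :
    ‖(algebraMap K R t * x) ^ n‖ = ‖t‖ ^ n * ‖x ^ n‖ := by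
  rw [mul_pow, ← map_pow, ← Algebra.smul_def, norm_smul, norm_pow]

lemma rad_smul (t : K) (x : R) : rad (algebraMap K R t * x) = ‖t‖ * rad x := by
  have key : ∀ (s : K) (y : R), s ≠ 0 → rad (algebraMap K R s * y) ≤ ‖s‖ * rad y := by
    intro s y hs
    have hs0 : 0 < ‖s‖ := norm_pos_iff.mpr hs
    refine le_of_forall_pos_le_add fun ε hε => ?_
    obtain ⟨m, hm, hpow⟩ := rad_exists_pow_lt
      (show rad y < rad y + ε / ‖s‖ from lt_add_of_pos_right _ (by positivity))
    have : ‖(algebraMap K R s * y) ^ m‖ ≤ (‖s‖ * (rad y + ε / ‖s‖)) ^ m := by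
      rw [norm_algebraMap_mul_pow, mul_pow]
      exact mul_le_mul_of_nonneg_left hpow.le (pow_nonneg (norm_nonneg s) m)
    have h2 := rad_le_of_pow_le (mul_nonneg (norm_nonneg s) (add_nonneg (rad_nonneg y) (by positivity))) hm this
    calc rad (algebraMap K R s * y) ≤ ‖s‖ * (rad y + ε / ‖s‖) := h2
      _ = ‖s‖ * rad y + ε := by field_simp
  rcases eq_or_ne t 0 with rfl | ht
  · simp [rad_zero]
  have ht0 : 0 < ‖t‖ := norm_pos_iff.mpr ht
  refine le_antisymm (key t x ht) ?_
  have hx : x = algebraMap K R t⁻¹ * (algebraMap K R t * x) := by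
    rw [← mul_assoc, ← map_mul, inv_mul_cancel₀ ht, map_one, one_mul]
  have := key t⁻¹ (algebraMap K R t * x) (inv_ne_zero ht)
  rw [← hx, norm_inv] at this
  calc ‖t‖ * rad x ≤ ‖t‖ * (‖t‖⁻¹ * rad (algebraMap K R t * x)) :=
        mul_le_mul_of_nonneg_left this ht0.le
    _ = rad (algebraMap K R t * x) := by field_simp

lemma eq_zero_of_rad_eq_zero (K : Type*) [NontriviallyNormedField K] [NormedAlgebra K R]
    (hbdd : ∃ C : ℝ, ∀ y : R, PowerBounded y → ‖y‖ ≤ C) {x : R} (h : rad x = 0) : x = 0 := by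
  obtain ⟨C, hC⟩ := hbdd
  have key : ∀ t : K, ‖t‖ * ‖x‖ ≤ C := by
    intro t
    have hpb : PowerBounded (algebraMap K R t * x) :=
      powerBounded_of_rad_lt_one (by rw [rad_smul, h, mul_zero]; norm_num)
    have := hC _ hpb
    rwa [← Algebra.smul_def, norm_smul] at this
  by_contra hx
  have hx' : 0 < ‖x‖ := norm_pos_iff.mpr hx
  obtain ⟨t, ht⟩ := NormedField.exists_lt_norm K (max (C / ‖x‖) 0)
  have h1 : C / ‖x‖ < ‖t‖ := lt_of_le_of_lt (le_max_left _ _) ht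
  rw [div_lt_iff₀ hx'] at h1
  exact absurd (key t) (not_le.mpr h1)

end radAlgebra

section density

lemma exists_norm_mem_Ioo (K : Type*) [NontriviallyNormedField K]
    (hnc : ¬ ∃ γ : ℝ, ∀ x : K, x ≠ 0 → ∃ n : ℤ, ‖x‖ = γ ^ n)
    {a b : ℝ} (ha : 0 < a) (hab : a < b) : ∃ t : K, t ≠ 0 ∧ a < ‖t‖ ∧ ‖t‖ < b := by
  set S : AddSubgroup ℝ :=
    { carrier := {r | ∃ t : K, t ≠ 0 ∧ Real.log ‖t‖ = r}
      zero_mem' := ⟨1, one_ne_zero, by simp⟩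
      add_mem' := by
        rintro r s ⟨t, ht, rfl⟩ ⟨u, hu, rfl⟩
        exact ⟨t * u, mul_ne_zero ht hu, by
          rw [norm_mul, Real.log_mul (norm_ne_zero_iff.mpr ht) (norm_ne_zero_iff.mpr hu)]⟩
      neg_mem' := by
        rintro r ⟨t, ht, rfl⟩
        exact ⟨t⁻¹, inv_ne_zero ht, by rw [norm_inv, Real.log_inv]⟩ } with hS
  rcases S.dense_or_cyclic with hd | ⟨g, hg⟩
  · obtain ⟨r, hrS, hr⟩ := hd.exists_mem_open isOpen_Ioo
      (Set.nonempty_Ioo.mpr (Real.log_lt_log ha hab))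
    obtain ⟨t, ht0, hlog⟩ := hrS
    have hpos : 0 < ‖t‖ := norm_pos_iff.mpr ht0
    refine ⟨t, ht0, ?_, ?_⟩
    · have h1 : Real.log a < Real.log ‖t‖ := hlog.symm ▸ hr.1
      exact (Real.log_lt_log_iff ha hpos).mp h1
    · have h2 : Real.log ‖t‖ < Real.log b := hlog.symm ▸ hr.2
      exact (Real.log_lt_log_iff hpos (ha.trans hab)).mp h2
  · exfalso
    refine hnc ⟨Real.exp g, fun x hx => ?_⟩
    have hmem : Real.log ‖x‖ ∈ S := ⟨x, hx, rfl⟩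
    rw [hg, AddSubgroup.mem_closure_singleton] at hmem
    obtain ⟨n, hn⟩ := hmem
    refine ⟨n, ?_⟩
    have hpos : 0 < ‖x‖ := norm_pos_iff.mpr hx
    have h1 : ‖x‖ = Real.exp ((n : ℝ) * g) := by
      rw [← zsmul_eq_mul, hn, Real.exp_log hpos]
    rw [h1, ← Real.rpow_intCast (Real.exp g) n, Real.rpow_def_of_pos (Real.exp_pos g),
      Real.log_exp, mul_comm]

end density

section radUltra

variable {K : Type*} [NontriviallyNormedField K] {R : Type*} [NormedCommRing R]
  [NormedAlgebra K R]

lemma PowerBounded.mul {u v : R} (hu : PowerBounded u) (hv : PowerBounded v) :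
    PowerBounded (u * v) := by
  obtain ⟨C, hC⟩ := hu
  obtain ⟨D, hD⟩ := hv
  refine ⟨C * D, fun n => ?_⟩
  rw [mul_pow]
  exact (norm_mul_le _ _).trans
    (mul_le_mul (hC n) (hD n) (norm_nonneg _) ((norm_nonneg _).trans (hC n)))

lemma PowerBounded.add [IsUltrametricDist R] {u v : R} (hu : PowerBounded u)
    (hv : PowerBounded v) : PowerBounded (u + v) := by
  obtain ⟨C, hC⟩ := hu
  obtain ⟨D, hD⟩ := hv
  have hC0 : 0 ≤ C := (norm_nonneg _).trans (hC 0)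
  have hD0 : 0 ≤ D := (norm_nonneg _).trans (hD 0)
  refine ⟨C * D, fun n => ?_⟩
  rw [add_pow]
  refine IsUltrametricDist.norm_sum_le_of_forall_le_of_nonneg (mul_nonneg hC0 hD0) ?_
  intro k _
  have h1 : u ^ k * v ^ (n - k) * (n.choose k : R) = (n.choose k) • (u ^ k * v ^ (n - k)) := by
    rw [nsmul_eq_mul, mul_comm]
  rw [h1]
  refine (IsUltrametricDist.norm_nsmul_le _ _).trans ?_
  exact (norm_mul_le _ _).trans
    (mul_le_mul (hC k) (hD (n - k)) (norm_nonneg _) ((norm_nonneg _).trans (hC k)))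

variable (hd : ∀ a b : ℝ, 0 < a → a < b → ∃ t : K, t ≠ 0 ∧ a < ‖t‖ ∧ ‖t‖ < b)
  (hbdd : ∃ C : ℝ, ∀ y : R, PowerBounded y → ‖y‖ ≤ C)

include hd hbdd

lemma rad_add_le_max [IsUltrametricDist R] (x y : R) :
    rad (x + y) ≤ max (rad x) (rad y) := by
  rcases eq_or_lt_of_le (le_max_iff.mpr (Or.inl (rad_nonneg x)) :
      (0:ℝ) ≤ max (rad x) (rad y)) with h0 | h0
  · have hx : rad x = 0 := le_antisymm (le_trans (le_max_left _ _) h0.symm.le) (rad_nonneg x)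
    have hy : rad y = 0 := le_antisymm (le_trans (le_max_right _ _) h0.symm.le) (rad_nonneg y)
    rw [eq_zero_of_rad_eq_zero K hbdd hx, eq_zero_of_rad_eq_zero K hbdd hy]
    simp [rad_zero]
  · refine le_of_forall_pos_le_add fun ε hε => ?_
    obtain ⟨t, ht0, ht1, ht2⟩ := hd _ _ h0 (lt_add_of_pos_right _ hε)
    have htn : 0 < ‖t‖ := norm_pos_iff.mpr ht0
    have hx : PowerBounded (algebraMap K R t⁻¹ * x) := by
      refine powerBounded_of_rad_lt_one ?_
      rw [rad_smul, norm_inv]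
      have : rad x < ‖t‖ := lt_of_le_of_lt (le_max_left _ _) ht1
      rw [inv_mul_lt_iff₀ htn, mul_one]
      exact this
    have hy : PowerBounded (algebraMap K R t⁻¹ * y) := by
      refine powerBounded_of_rad_lt_one ?_
      rw [rad_smul, norm_inv]
      have : rad y < ‖t‖ := lt_of_le_of_lt (le_max_right _ _) ht1
      rw [inv_mul_lt_iff₀ htn, mul_one]
      exact this
    have hsum := rad_le_one_of_powerBounded (hx.add hy)
    rw [← mul_add, rad_smul, norm_inv] at hsum
    have : rad (x + y) ≤ ‖t‖ := by
      rwa [inv_mul_le_iff₀ htn, mul_one] at hsum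
    exact this.trans ht2.le

lemma rad_mul_le [IsUltrametricDist R] (x y : R) : rad (x * y) ≤ rad x * rad y := by
  rcases eq_or_ne (rad x) 0 with hx0 | hx0
  · rw [eq_zero_of_rad_eq_zero K hbdd hx0]; simp [rad_zero]
  rcases eq_or_ne (rad y) 0 with hy0 | hy0
  · rw [eq_zero_of_rad_eq_zero K hbdd hy0]; simp [rad_zero]
  have hx : 0 < rad x := (rad_nonneg x).lt_of_ne (Ne.symm hx0)
  have hy : 0 < rad y := (rad_nonneg y).lt_of_ne (Ne.symm hy0)
  have key : ∀ s t : ℝ, rad x < s → rad y < t → rad (x * y) ≤ s * t := by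
    intro s t hs ht
    obtain ⟨σ, hσ0, hσ1, hσ2⟩ := hd _ _ hx hs
    obtain ⟨τ, hτ0, hτ1, hτ2⟩ := hd _ _ hy ht
    have hσn : 0 < ‖σ‖ := norm_pos_iff.mpr hσ0
    have hτn : 0 < ‖τ‖ := norm_pos_iff.mpr hτ0
    have h1 : PowerBounded (algebraMap K R σ⁻¹ * x) := by
      refine powerBounded_of_rad_lt_one ?_
      rw [rad_smul, norm_inv, inv_mul_lt_iff₀ hσn, mul_one]
      exact hσ1
    have h2 : PowerBounded (algebraMap K R τ⁻¹ * y) := by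
      refine powerBounded_of_rad_lt_one ?_
      rw [rad_smul, norm_inv, inv_mul_lt_iff₀ hτn, mul_one]
      exact hτ1
    have h3 := rad_le_one_of_powerBounded (h1.mul h2)
    have hid : algebraMap K R σ⁻¹ * x * (algebraMap K R τ⁻¹ * y)
        = algebraMap K R (σ * τ)⁻¹ * (x * y) := by
      rw [mul_inv, map_mul]; ring
    rw [hid, rad_smul, norm_inv, norm_mul, inv_mul_le_iff₀ (by positivity), mul_one] at h3
    calc rad (x * y) ≤ ‖σ‖ * ‖τ‖ := h3
      _ ≤ s * t := mul_le_mul hσ2.le hτ2.le hτn.le (hσn.le.trans hσ2.le)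
  by_contra hc
  push_neg at hc
  set A := rad (x * y)
  have hden : (0:ℝ) < rad x + rad y + 2 := by nlinarith
  set δ := min 1 ((A - rad x * rad y) / (rad x + rad y + 2)) with hδ
  have hδ0 : 0 < δ := lt_min one_pos (div_pos (by linarith) hden)
  have hδ1 : δ ≤ 1 := min_le_left _ _
  have hδ2 : δ * (rad x + rad y + 2) ≤ A - rad x * rad y := by
    have h' := min_le_right 1 ((A - rad x * rad y) / (rad x + rad y + 2))
    rw [← hδ] at h'
    calc δ * (rad x + rad y + 2) ≤ ((A - rad x * rad y) / (rad x + rad y + 2))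
          * (rad x + rad y + 2) := mul_le_mul_of_nonneg_right h' hden.le
      _ = A - rad x * rad y := by field_simp
  have := key (rad x + δ) (rad y + δ) (lt_add_of_pos_right _ hδ0) (lt_add_of_pos_right _ hδ0)
  nlinarith [hx.le, hy.le, hδ0.le]

lemma rad_pow_le [IsUltrametricDist R] (x : R) (m : ℕ) : rad (x ^ m) ≤ rad x ^ m := by
  induction m with
  | zero => simpa using rad_one_le
  | succ m ih =>
    rw [pow_succ, pow_succ]
    exact (rad_mul_le hd hbdd _ _).trans (mul_le_mul_of_nonneg_right ih (rad_nonneg x))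

lemma rad_lipschitz [IsUltrametricDist R] : LipschitzWith 1 (rad : R → ℝ) := by
  refine LipschitzWith.of_dist_le_mul fun a b => ?_
  simp only [NNReal.coe_one, one_mul]
  rw [Real.dist_eq, dist_eq_norm, abs_sub_le_iff]
  constructor
  · have h1 : rad a ≤ max (rad b) (rad (a - b)) := by
      have : a = b + (a - b) := by ring
      calc rad a = rad (b + (a - b)) := by rw [← this]
        _ ≤ _ := rad_add_le_max hd hbdd _ _
    have h2 : max (rad b) (rad (a - b)) ≤ rad b + ‖a - b‖ :=
      max_le (le_add_of_nonneg_right (norm_nonneg _))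
        (le_add_of_nonneg_left (rad_nonneg b) |>.trans_eq rfl |>.trans
          (add_le_add le_rfl (rad_le_norm _)))
    linarith [h1.trans h2]
  · have h1 : rad b ≤ max (rad a) (rad (b - a)) := by
      have : b = a + (b - a) := by ring
      calc rad b = rad (a + (b - a)) := by rw [← this]
        _ ≤ _ := rad_add_le_max hd hbdd _ _
    have h2 : max (rad a) (rad (b - a)) ≤ rad a + ‖a - b‖ := by
      refine max_le (le_add_of_nonneg_right (norm_nonneg _)) ?_
      have : ‖b - a‖ = ‖a - b‖ := by rw [← norm_neg]; congr 1; ring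
      calc rad (b - a) ≤ ‖b - a‖ := rad_le_norm _
        _ = ‖a - b‖ := this
        _ ≤ rad a + ‖a - b‖ := le_add_of_nonneg_left (rad_nonneg a)
    linarith [h1.trans h2]

lemma rad_sum_le [IsUltrametricDist R] {ι : Type*} (s : Finset ι) (f : ι → R) {M : ℝ}
    (hM : 0 ≤ M) (h : ∀ i ∈ s, rad (f i) ≤ M) : rad (∑ i ∈ s, f i) ≤ M := by
  classical
  induction s using Finset.induction_on with
  | empty => simpa [rad_zero] using hM
  | @insert a s' hmem ih =>
    rw [Finset.sum_insert hmem]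
    refine (rad_add_le_max hd hbdd _ _).trans (max_le ?_ ?_)
    · exact h a (Finset.mem_insert_self a s')
    · exact ih fun i hi => h i (Finset.mem_insert_of_mem hi)

end radUltra

section radOne

variable {R : Type*} [NormedCommRing R]

lemma rad_one (h1 : (1 : R) ≠ 0) : rad (1 : R) = 1 := by
  refine le_antisymm rad_one_le ?_
  have hpos : 0 < ‖(1 : R)‖ := norm_pos_iff.mpr h1
  have hge : (1 : ℝ) ≤ ‖(1 : R)‖ := by
    have := norm_mul_le (1 : R) 1
    rw [mul_one] at this
    nlinarith
  refine le_csInf (radSet_nonempty _) ?_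
  rintro r ⟨n, rfl⟩
  rw [one_pow]
  calc (1:ℝ) = 1 ^ ((n + 1 : ℝ))⁻¹ := (Real.one_rpow _).symm
    _ ≤ ‖(1:R)‖ ^ ((n + 1 : ℝ))⁻¹ := Real.rpow_le_rpow zero_le_one hge (by positivity)

lemma isUnit_of_rad_lt_one [CompleteSpace R] {u : R} (h : rad (1 - u) < 1) : IsUnit u := by
  obtain ⟨m, hm, hpow⟩ := rad_exists_pow_lt h
  rw [one_pow] at hpow
  have hu : IsUnit (1 - (1 - u) ^ m) := (Units.oneSub _ hpow).isUnit
  have hid : u * (∑ i ∈ Finset.range m, (1 - u) ^ i) = 1 - (1 - u) ^ m := by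
    have h3 := geom_sum_mul (1 - u) m
    linear_combination -h3
  exact isUnit_of_mul_isUnit_left (hid ▸ hu)

end radOne

section spectral

lemma spectralNrm_eq_rad (K : Type u) (R : Type v) [NontriviallyNormedField K]
    [NormedCommRing R] [NormedAlgebra K R]
    (hd : ∀ a b : ℝ, 0 < a → a < b → ∃ t : K, t ≠ 0 ∧ a < ‖t‖ ∧ ‖t‖ < b)
    (x : R) : spectralNrm K R x = rad x := by
  have hbb : BddBelow {r : ℝ | ∃ t : K, t ≠ 0 ∧ r = ‖t‖⁻¹ ∧
      PowerBounded (algebraMap K R t * x)} := by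
    refine ⟨0, ?_⟩
    rintro r ⟨t, ht, rfl, hpb⟩
    positivity
  have hne : {r : ℝ | ∃ t : K, t ≠ 0 ∧ r = ‖t‖⁻¹ ∧
      PowerBounded (algebraMap K R t * x)}.Nonempty := by
    rcases eq_or_lt_of_le (rad_nonneg x) with h0 | h0
    · obtain ⟨w, hw⟩ := NormedField.exists_one_lt_norm K
      have hw0 : w ≠ 0 := norm_pos_iff.mp (lt_trans one_pos hw)
      exact ⟨‖w‖⁻¹, w, hw0, rfl, powerBounded_of_rad_lt_one
        (by rw [rad_smul, ← h0, mul_zero]; norm_num)⟩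
    · obtain ⟨t, ht0, ht1, ht2⟩ := hd ((rad x)⁻¹ / 2) (rad x)⁻¹
        (by positivity) (by nlinarith [inv_pos.mpr h0])
      refine ⟨‖t‖⁻¹, t, ht0, rfl, powerBounded_of_rad_lt_one ?_⟩
      rw [rad_smul]
      calc ‖t‖ * rad x < (rad x)⁻¹ * rad x :=
            mul_lt_mul_of_pos_right ht2 h0
        _ = 1 := inv_mul_cancel₀ h0.ne'
  refine le_antisymm ?_ ?_
  · rw [spectralNrm, Real.sInf_le_iff hbb hne]
    intro ε hε
    rcases eq_or_lt_of_le (rad_nonneg x) with h0 | h0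
    · obtain ⟨t, ht⟩ := NormedField.exists_lt_norm K (max ε⁻¹ 0)
      have ht0 : t ≠ 0 := norm_pos_iff.mp (lt_of_le_of_lt (le_max_right _ _) ht)
      have htε : ε⁻¹ < ‖t‖ := lt_of_le_of_lt (le_max_left _ _) ht
      refine ⟨‖t‖⁻¹, ⟨t, ht0, rfl, powerBounded_of_rad_lt_one
        (by rw [rad_smul, ← h0, mul_zero]; norm_num)⟩, ?_⟩
      rw [← h0, zero_add]
      have htpos : 0 < ‖t‖ := lt_trans (by positivity) htε
      exact (inv_lt_comm₀ htpos hε).mpr htε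
    · obtain ⟨t, ht0, ht1, ht2⟩ := hd (rad x + ε)⁻¹ (rad x)⁻¹ (by positivity)
        (by apply inv_strictAnti₀ h0 (lt_add_of_pos_right _ hε))
      have htn : 0 < ‖t‖ := norm_pos_iff.mpr ht0
      refine ⟨‖t‖⁻¹, ⟨t, ht0, rfl, powerBounded_of_rad_lt_one ?_⟩, ?_⟩
      · rw [rad_smul]
        calc ‖t‖ * rad x < (rad x)⁻¹ * rad x := mul_lt_mul_of_pos_right ht2 h0
          _ = 1 := inv_mul_cancel₀ h0.ne'
      · exact (inv_lt_comm₀ htn (by positivity)).mpr ht1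
  · refine le_csInf hne ?_
    rintro r ⟨t, ht, rfl, hpb⟩
    have htn : 0 < ‖t‖ := norm_pos_iff.mpr ht
    have h1 := rad_le_one_of_powerBounded hpb
    rw [rad_smul] at h1
    calc rad x = ‖t‖⁻¹ * (‖t‖ * rad x) := by field_simp
      _ ≤ ‖t‖⁻¹ * 1 := mul_le_mul_of_nonneg_left h1 (by positivity)
      _ = ‖t‖⁻¹ := mul_one _

end spectral

lemma max_pow_eq {a b : ℝ} (ha : 0 ≤ a) (hb : 0 ≤ b) (N : ℕ) :
    max a b ^ N = max (a ^ N) (b ^ N) := by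
  rcases le_total a b with h | h
  · rw [max_eq_right h, max_eq_right (pow_le_pow_left₀ ha h N)]
  · rw [max_eq_left h, max_eq_left (pow_le_pow_left₀ hb h N)]


set_option maxHeartbeats 2000000 in
/-- Let `R` be a perfectoid `K`-algebra with tilt `R^♭` (encoded abstractly via the
multiplicative projection `sharp : R^♭ → R` with `p`-th roots, the limit formula for
addition, compatibility with the tilt `K^♭ → K` of scalars, and `R^{♭°}/ϖ^♭ ≅ R°/ϖ`).
Then the spectral norms satisfy `‖x‖_{R^♭} = ‖x^♯‖_R` for all `x ∈ R^♭`, and `R` is a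
perfectoid field (i.e. a field whose spectral norm is multiplicative) if and only if
`R^♭` is. -/
theorem perfectoid_field_iff_tilt
    (K : Type u) [NontriviallyNormedField K] [CompleteSpace K]
    (p : ℕ) (hp : p.Prime) (hK : IsPerfectoidNormedField K p)
    (Kb : Type u) [NontriviallyNormedField Kb] [CompleteSpace Kb] [CharP Kb p]
    (hKb : IsPerfectoidNormedField Kb p)
    (sharpK : Kb →*₀ K) (hnormK : ∀ t : Kb, ‖sharpK t‖ = ‖t‖)
    (R : Type u) [NormedCommRing R] [NormedAlgebra K R] [CompleteSpace R]
    [IsUltrametricDist R]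
    (ϖ : K) (hϖ0 : ϖ ≠ 0) (hϖp : ‖(p : K)‖ ≤ ‖ϖ‖) (hϖ1 : ‖ϖ‖ < 1)
    (hR : IsPerfectoidAlgebra K R p ϖ)
    (Rb : Type u) [NormedCommRing Rb] [NormedAlgebra Kb Rb] [CompleteSpace Rb]
    [IsUltrametricDist Rb]
    (ϖb : Kb) (hϖb0 : ϖb ≠ 0) (hϖb1 : ‖ϖb‖ < 1) (hϖϖb : sharpK ϖb = ϖ)
    (hRb : IsPerfectoidAlgebra Kb Rb p ϖb)
    (sharp : Rb →*₀ R) (hnorm : ∀ x : Rb, ‖sharp x‖ = ‖x‖)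
    (hscal : ∀ t : Kb, sharp (algebraMap Kb Rb t) = algebraMap K R (sharpK t))
    (root : Rb → Rb) (hroot : ∀ x, root x ^ p = x)
    (hlim : ∀ x y : Rb, Filter.Tendsto
        (fun n => (sharp (root^[n] x) + sharp (root^[n] y)) ^ p ^ n)
        Filter.atTop (nhds (sharp (x + y))))
    (hsurj : ∀ a : R, PowerBounded a → ∃ x : Rb, ‖a - sharp x‖ ≤ ‖ϖ‖) :
    (∀ x : Rb, spectralNrm Kb Rb x = spectralNrm K R (sharp x)) ∧
    ((IsField R ∧ ∀ x y : R, spectralNrm K R (x * y) = spectralNrm K R x * spectralNrm K R y)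
      ↔ (IsField Rb ∧ ∀ x y : Rb,
          spectralNrm Kb Rb (x * y) = spectralNrm Kb Rb x * spectralNrm Kb Rb y)) := by
  have hUK : IsUltrametricDist K := hK.1
  have hdK : ∀ a b : ℝ, 0 < a → a < b → ∃ t : K, t ≠ 0 ∧ a < ‖t‖ ∧ ‖t‖ < b :=
    fun a b ha hab => exists_norm_mem_Ioo K hK.2.1 ha hab
  have hdKb : ∀ a b : ℝ, 0 < a → a < b → ∃ t : Kb, t ≠ 0 ∧ a < ‖t‖ ∧ ‖t‖ < b :=
    fun a b ha hab => exists_norm_mem_Ioo Kb hKb.2.1 ha hab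
  have hbR := hR.2.1
  have hbRb := hRb.2.1
  have hp1 : ‖(p : K)‖ < 1 := hK.2.2.1
  have hϖpos : 0 < ‖ϖ‖ := norm_pos_iff.mpr hϖ0
  have hradsharp : ∀ z : Rb, rad (sharp z) = rad z := fun z =>
    rad_congr fun n hn => by rw [← map_pow, hnorm]
  have hsR : ∀ a : R, spectralNrm K R a = rad a := fun a => spectralNrm_eq_rad K R hdK a
  have hsRb : ∀ a : Rb, spectralNrm Kb Rb a = rad a := fun a => spectralNrm_eq_rad Kb Rb hdKb a
  refine ⟨fun x => by rw [hsR, hsRb, hradsharp], ?_⟩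
  -- compatible roots
  have hiter : ∀ (n : ℕ) (z : Rb), (root^[n] z) ^ (p ^ n) = z := by
    intro n
    induction n with
    | zero => intro z; simp
    | succ n ih =>
      intro z
      rw [Function.iterate_succ_apply, pow_succ, pow_mul, ih (root z), hroot]
  -- the key almost-additivity estimate for sharp
  have hE : ∀ u v : Rb, rad (sharp (u + v) - sharp u - sharp v)
      ≤ ‖(p : K)‖ * max (rad (sharp u)) (rad (sharp v)) := by
    intro u v
    set M := ‖(p : K)‖ * max (rad (sharp u)) (rad (sharp v)) with hM
    have hM0 : 0 ≤ M := mul_nonneg (norm_nonneg _) (le_trans (rad_nonneg _) (le_max_left _ _))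
    have key : ∀ n : ℕ, rad ((sharp (root^[n] u) + sharp (root^[n] v)) ^ p ^ n
        - sharp u - sharp v) ≤ M := by
      intro n
      set N := p ^ n with hN
      have hN0 : N ≠ 0 := pow_ne_zero _ hp.ne_zero
      set A := sharp (root^[n] u) with hA'
      set B := sharp (root^[n] v) with hB'
      have hA : A ^ N = sharp u := by rw [hA', ← map_pow, hN, hiter]
      have hB : B ^ N = sharp v := by rw [hB', ← map_pow, hN, hiter]
      have hNmem : N ∈ Finset.range (N + 1) := Finset.mem_range.mpr (by omega)
      have h0mem : (0 : ℕ) ∈ (Finset.range (N + 1)).erase N :=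
        Finset.mem_erase.mpr ⟨fun h => hN0 h.symm, Finset.mem_range.mpr (by omega)⟩
      have hexp : (A + B) ^ N - sharp u - sharp v
          = ∑ k ∈ ((Finset.range (N + 1)).erase N).erase 0,
              A ^ k * B ^ (N - k) * (N.choose k : R) := by
        rw [add_pow, ← Finset.add_sum_erase _ _ hNmem, ← Finset.add_sum_erase _ _ h0mem]
        simp only [Nat.sub_self, pow_zero, mul_one, Nat.choose_self, Nat.cast_one, hA,
          Nat.choose_zero_right, Nat.sub_zero, one_mul, hB]
        ring
      rw [hexp]
      refine rad_sum_le hdK hbR _ _ hM0 ?_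
      intro k hk
      obtain ⟨hk0, hk'⟩ := Finset.mem_erase.mp hk
      obtain ⟨hkN, hkr⟩ := Finset.mem_erase.mp hk'
      have hdvd : p ∣ N.choose k := by
        rw [hN]
        exact hp.dvd_choose_pow hk0 (hN ▸ hkN)
      obtain ⟨c, hc⟩ := hdvd
      have hcast : ((N.choose k : ℕ) : R) = algebraMap K R ((N.choose k : ℕ) : K) :=
        (map_natCast (algebraMap K R) _).symm
      have hnc : ‖((N.choose k : ℕ) : K)‖ ≤ ‖(p : K)‖ := by
        rw [hc]
        push_cast
        rw [norm_mul]
        calc ‖(p : K)‖ * ‖(c : K)‖ ≤ ‖(p : K)‖ * 1 :=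
              mul_le_mul_of_nonneg_left (IsUltrametricDist.norm_natCast_le_one K c)
                (norm_nonneg _)
          _ = ‖(p : K)‖ := mul_one _
      have hterm : A ^ k * B ^ (N - k) * ((N.choose k : ℕ) : R)
          = algebraMap K R ((N.choose k : ℕ) : K) * (A ^ k * B ^ (N - k)) := by
        rw [hcast]; ring
      rw [hterm, rad_smul]
      have h3 : rad (A ^ k * B ^ (N - k)) ≤ rad A ^ k * rad B ^ (N - k) :=
        (rad_mul_le hdK hbR _ _).trans
          (mul_le_mul (rad_pow_le hdK hbR _ _) (rad_pow_le hdK hbR _ _)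
            (rad_nonneg _) (pow_nonneg (rad_nonneg _) _))
      have h4 : rad A ^ k * rad B ^ (N - k) ≤ max (rad A) (rad B) ^ N := by
        have hkle : k ≤ N := by
          have := Finset.mem_range.mp hkr; omega
        calc rad A ^ k * rad B ^ (N - k)
            ≤ max (rad A) (rad B) ^ k * max (rad A) (rad B) ^ (N - k) :=
              mul_le_mul (pow_le_pow_left₀ (rad_nonneg A) (le_max_left _ _) k)
                (pow_le_pow_left₀ (rad_nonneg B) (le_max_right _ _) (N - k))
                (pow_nonneg (rad_nonneg _) _)
                (pow_nonneg (le_trans (rad_nonneg _) (le_max_left _ _)) _)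
          _ = max (rad A) (rad B) ^ N := by rw [← pow_add]; congr 1; omega
      have h5 : max (rad A) (rad B) ^ N ≤ max (rad (sharp u)) (rad (sharp v)) := by
        rw [max_pow_eq (rad_nonneg A) (rad_nonneg B)]
        refine max_le_max ?_ ?_
        · rw [← hA]; exact rad_pow_ge hN0
        · rw [← hB]; exact rad_pow_ge hN0
      calc ‖((N.choose k : ℕ) : K)‖ * rad (A ^ k * B ^ (N - k))
          ≤ ‖(p : K)‖ * max (rad (sharp u)) (rad (sharp v)) :=
            mul_le_mul hnc (h3.trans (h4.trans h5)) (rad_nonneg _) (norm_nonneg _)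
        _ = M := hM.symm
    have hcont := (rad_lipschitz hdK hbR (R := R)).continuous
    have htend : Filter.Tendsto (fun n => (sharp (root^[n] u) + sharp (root^[n] v)) ^ p ^ n
        - (sharp u + sharp v)) Filter.atTop (nhds (sharp (u + v) - (sharp u + sharp v))) :=
      (hlim u v).sub tendsto_const_nhds
    have hle : rad (sharp (u + v) - (sharp u + sharp v)) ≤ M :=
      le_of_tendsto ((hcont.tendsto _).comp htend)
        (Filter.Eventually.of_forall fun n => by
          simpa [Function.comp, sub_sub] using key n)
    simpa [sub_sub] using hle
  by_cases h1R : (1 : R) = 0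
  · have h1b : (1 : Rb) = 0 := by
      have h := hnorm 1
      rw [map_one, h1R, norm_zero] at h
      exact norm_eq_zero.mp h.symm
    constructor
    · rintro ⟨hf, -⟩
      exfalso
      obtain ⟨a, b, hab⟩ := hf.exists_pair_ne
      exact hab (by rw [← mul_one a, ← mul_one b, h1R, mul_zero, mul_zero])
    · rintro ⟨hf, -⟩
      exfalso
      obtain ⟨a, b, hab⟩ := hf.exists_pair_ne
      exact hab (by rw [← mul_one a, ← mul_one b, h1b, mul_zero, mul_zero])
  · have h1b : (1 : Rb) ≠ 0 := fun h => h1R (by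
      have h2 := hnorm 1
      rw [map_one, h, norm_zero] at h2
      exact norm_eq_zero.mp h2)
    have hone : rad (1 : R) = 1 := rad_one h1R
    have hnear : ∀ (w : R) (x : Rb), ‖w - sharp x‖ ≤ ‖ϖ‖ → ‖ϖ‖ < rad w →
        rad (sharp x) = rad w := by
      intro w x hx hw
      have hd1 : rad (w - sharp x) ≤ ‖ϖ‖ := (rad_le_norm _).trans hx
      have hle : rad (sharp x) ≤ rad w := by
        have hid : sharp x = w + -(w - sharp x) := by ring
        calc rad (sharp x) = rad (w + -(w - sharp x)) := by rw [← hid]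
          _ ≤ max (rad w) (rad (-(w - sharp x))) := rad_add_le_max hdK hbR _ _
          _ ≤ rad w := by rw [rad_neg]; exact max_le le_rfl (hd1.trans hw.le)
      refine le_antisymm hle ?_
      have h' : rad w ≤ max (rad (sharp x)) (rad (w - sharp x)) := by
        have hid : w = sharp x + (w - sharp x) := by ring
        calc rad w = rad (sharp x + (w - sharp x)) := by rw [← hid]
          _ ≤ _ := rad_add_le_max hdK hbR _ _
      by_contra hco
      push_neg at hco
      have hlt : max (rad (sharp x)) (rad (w - sharp x)) < rad w :=
        max_lt hco (lt_of_le_of_lt hd1 hw)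
      linarith
    constructor
    · rintro ⟨hfR, hmR'⟩
      have hmR : ∀ a c : R, rad (a * c) = rad a * rad c := fun a c => by
        have h := hmR' a c; rwa [hsR, hsR, hsR] at h
      refine ⟨?_, fun x y => ?_⟩
      · -- IsField Rb
        refine ⟨⟨0, 1, fun h => h1b h.symm⟩, mul_comm, ?_⟩
        intro x hx
        have hρ0 : 0 < rad x := by
          rcases (rad_nonneg x).lt_or_eq with h | h
          · exact h
          · exact absurd (eq_zero_of_rad_eq_zero Kb hbRb h.symm) hx
        obtain ⟨σ, hσ0, hσ1, hσ2⟩ := hdKb (‖ϖ‖ / rad x) (1 / rad x)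
          (div_pos hϖpos hρ0) ((div_lt_div_iff_of_pos_right hρ0).mpr hϖ1)
        set x' := algebraMap Kb Rb σ * x with hx'
        have hρ' : rad x' = ‖σ‖ * rad x := rad_smul σ x
        have hρ'1 : rad x' < 1 := by rw [hρ']; exact (lt_div_iff₀ hρ0).mp hσ2
        have hρ'ϖ : ‖ϖ‖ < rad x' := by rw [hρ']; exact (div_lt_iff₀ hρ0).mp hσ1
        suffices hux' : IsUnit x' by
          rw [hx'] at hux'
          obtain ⟨y, hy⟩ := (isUnit_of_mul_isUnit_right hux').exists_right_inv
          exact ⟨y, hy⟩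
        set b := sharp x' with hb'
        have hbrad : rad b = rad x' := hradsharp x'
        have hbpos : 0 < rad b := by rw [hbrad]; linarith
        have hb0 : b ≠ 0 := by
          intro h
          rw [h, rad_zero] at hbrad
          linarith
        obtain ⟨binv, hbinv⟩ := hfR.mul_inv_cancel hb0
        have h' : rad b * rad binv = 1 := by rw [← hmR, hbinv, hone]
        have hbinvrad : rad binv = (rad b)⁻¹ :=
          mul_left_cancel₀ hbpos.ne' (by rw [h', mul_inv_cancel₀ hbpos.ne'])
        set aϖ := algebraMap K R ϖ with haϖ
        have hradϖ : rad aϖ = ‖ϖ‖ := by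
          rw [haϖ, show algebraMap K R ϖ = algebraMap K R ϖ * 1 from (mul_one _).symm,
            rad_smul, hone, mul_one]
        have haw1 : rad (aϖ * binv) < 1 := by
          rw [haϖ, rad_smul, hbinvrad]
          calc ‖ϖ‖ * (rad b)⁻¹ < rad b * (rad b)⁻¹ :=
                mul_lt_mul_of_pos_right (by linarith) (inv_pos.mpr hbpos)
            _ = 1 := mul_inv_cancel₀ hbpos.ne'
        obtain ⟨z, hz⟩ := hsurj _ (powerBounded_of_rad_lt_one haw1)
        have hkey0 : b * (aϖ * binv) = aϖ := by rw [mul_left_comm, hbinv, mul_one]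
        have he : rad (sharp z - aϖ * binv) ≤ ‖ϖ‖ := by
          refine (rad_le_norm _).trans ?_
          calc ‖sharp z - aϖ * binv‖ = ‖aϖ * binv - sharp z‖ := by
                rw [← norm_neg]; congr 1; ring
            _ ≤ ‖ϖ‖ := hz
        have h1 : rad (sharp (x' * z) - aϖ) ≤ rad x' * ‖ϖ‖ := by
          have hid : sharp (x' * z) - aϖ = b * (sharp z - aϖ * binv) := by
            rw [map_mul, ← hb', mul_sub, hkey0]
          rw [hid]
          calc rad (b * (sharp z - aϖ * binv)) ≤ rad b * rad (sharp z - aϖ * binv) :=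
                rad_mul_le hdK hbR _ _
            _ ≤ rad b * ‖ϖ‖ := mul_le_mul_of_nonneg_left he hbpos.le
            _ = rad x' * ‖ϖ‖ := by rw [hbrad]
        have h2 : rad (sharp (x' * z)) ≤ ‖ϖ‖ := by
          have hid : sharp (x' * z) = aϖ + (sharp (x' * z) - aϖ) := by ring
          calc rad (sharp (x' * z)) = rad (aϖ + (sharp (x' * z) - aϖ)) := by rw [← hid]
            _ ≤ max (rad aϖ) (rad (sharp (x' * z) - aϖ)) := rad_add_le_max hdK hbR _ _
            _ ≤ ‖ϖ‖ := max_le hradϖ.le (h1.trans (by nlinarith))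
        set d := algebraMap Kb Rb ϖb - x' * z with hdd
        have hdsum : d + x' * z = algebraMap Kb Rb ϖb := by rw [hdd]; ring
        have hE' := hE d (x' * z)
        rw [hdsum, hscal, hϖϖb, ← haϖ] at hE'
        have hs1 : rad (sharp d) ≤ max (rad (aϖ - sharp d - sharp (x' * z)))
            (rad x' * ‖ϖ‖) := by
          have hid : sharp d = -(aϖ - sharp d - sharp (x' * z)) + (aϖ - sharp (x' * z)) := by
            ring
          calc rad (sharp d)
              = rad (-(aϖ - sharp d - sharp (x' * z)) + (aϖ - sharp (x' * z))) := by rw [← hid]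
            _ ≤ max (rad (-(aϖ - sharp d - sharp (x' * z)))) (rad (aϖ - sharp (x' * z))) :=
                rad_add_le_max hdK hbR _ _
            _ ≤ _ := by
                rw [rad_neg]
                refine max_le_max le_rfl ?_
                calc rad (aϖ - sharp (x' * z)) = rad (-(sharp (x' * z) - aϖ)) := by
                      congr 1; ring
                  _ = rad (sharp (x' * z) - aϖ) := rad_neg _
                  _ ≤ rad x' * ‖ϖ‖ := h1
        set r := rad (sharp d) with hrr
        have hcomb : r ≤ max (‖(p : K)‖ * max r ‖ϖ‖) (rad x' * ‖ϖ‖) := by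
          refine hs1.trans (max_le_max ?_ le_rfl)
          refine hE'.trans ?_
          exact mul_le_mul_of_nonneg_left (max_le_max le_rfl h2) (norm_nonneg _)
        have hr0 : 0 ≤ r := rad_nonneg _
        have hrϖ : r ≤ ‖ϖ‖ := by
          by_contra hcon
          push_neg at hcon
          rw [max_eq_left hcon.le] at hcomb
          have hb1 : ‖(p : K)‖ * r < r := by nlinarith [norm_nonneg (p : K)]
          have hb2 : rad x' * ‖ϖ‖ < r := by nlinarith [rad_nonneg x']
          have := max_lt hb1 hb2
          linarith
        have hq : max ‖(p : K)‖ (rad x') < 1 := max_lt hp1 hρ'1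
        have hfinal : r ≤ ‖ϖ‖ * max ‖(p : K)‖ (rad x') := by
          rw [max_eq_right hrϖ] at hcomb
          calc r ≤ max (‖(p : K)‖ * ‖ϖ‖) (rad x' * ‖ϖ‖) := hcomb
            _ = max ‖(p : K)‖ (rad x') * ‖ϖ‖ := (max_mul_of_nonneg _ _ hϖpos.le).symm
            _ = ‖ϖ‖ * max ‖(p : K)‖ (rad x') := mul_comm _ _
        have hϖbn : ‖ϖb‖ = ‖ϖ‖ := by rw [← hϖϖb, hnormK]
        have hgid : 1 - x' * (algebraMap Kb Rb ϖb⁻¹ * z)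
            = algebraMap Kb Rb ϖb⁻¹ * d := by
          rw [hdd, mul_sub, ← map_mul, inv_mul_cancel₀ hϖb0, map_one]
          ring
        have hglt : rad (1 - x' * (algebraMap Kb Rb ϖb⁻¹ * z)) < 1 := by
          rw [hgid, rad_smul, norm_inv, hϖbn]
          have hrd : rad d = r := by rw [hrr]; exact (hradsharp d).symm
          calc ‖ϖ‖⁻¹ * rad d ≤ ‖ϖ‖⁻¹ * (‖ϖ‖ * max ‖(p : K)‖ (rad x')) := by
                rw [hrd]; exact mul_le_mul_of_nonneg_left hfinal (by positivity)
            _ = max ‖(p : K)‖ (rad x') := by field_simp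
            _ < 1 := hq
        exact isUnit_of_mul_isUnit_left (isUnit_of_rad_lt_one hglt)
      · -- multiplicativity on Rb
        have h := hmR (sharp x) (sharp y)
        rw [← map_mul] at h
        rw [hradsharp, hradsharp, hradsharp] at h
        rw [hsRb, hsRb, hsRb]
        exact h
    · rintro ⟨hfb, hmb'⟩
      have hmb : ∀ a c : Rb, rad (a * c) = rad a * rad c := fun a c => by
        have h := hmb' a c; rwa [hsRb, hsRb, hsRb] at h
      have hsq0 : 0 < Real.sqrt ‖ϖ‖ := Real.sqrt_pos.mpr hϖpos
      have hsq1 : Real.sqrt ‖ϖ‖ < 1 := by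
        calc Real.sqrt ‖ϖ‖ < Real.sqrt 1 := Real.sqrt_lt_sqrt hϖpos.le hϖ1
          _ = 1 := Real.sqrt_one
      have hsqsq : Real.sqrt ‖ϖ‖ * Real.sqrt ‖ϖ‖ = ‖ϖ‖ := Real.mul_self_sqrt hϖpos.le
      have hsqϖ : ‖ϖ‖ < Real.sqrt ‖ϖ‖ := by
        calc ‖ϖ‖ = Real.sqrt ‖ϖ‖ * Real.sqrt ‖ϖ‖ := hsqsq.symm
          _ < Real.sqrt ‖ϖ‖ * 1 := mul_lt_mul_of_pos_left hsq1 hsq0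
          _ = Real.sqrt ‖ϖ‖ := mul_one _
      have hmR : ∀ a c : R, rad (a * c) = rad a * rad c := by
        have hcore : ∀ a c : R, Real.sqrt ‖ϖ‖ < rad a → rad a < 1 →
            Real.sqrt ‖ϖ‖ < rad c → rad c < 1 → rad (a * c) = rad a * rad c := by
          intro a c ha1 ha2 hc1 hc2
          obtain ⟨x, hx⟩ := hsurj a (powerBounded_of_rad_lt_one ha2)
          obtain ⟨y, hy⟩ := hsurj c (powerBounded_of_rad_lt_one hc2)
          have hax : rad (sharp x) = rad a := hnear a x hx (lt_trans hsqϖ ha1)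
          have hcy : rad (sharp y) = rad c := hnear c y hy (lt_trans hsqϖ hc1)
          have hmain : rad (a * c - sharp x * sharp y) ≤ ‖ϖ‖ := by
            have hid : a * c - sharp x * sharp y
                = a * (c - sharp y) + sharp y * (a - sharp x) := by ring
            calc rad (a * c - sharp x * sharp y)
                = rad (a * (c - sharp y) + sharp y * (a - sharp x)) := by rw [hid]
              _ ≤ max (rad (a * (c - sharp y))) (rad (sharp y * (a - sharp x))) :=
                  rad_add_le_max hdK hbR _ _
              _ ≤ ‖ϖ‖ := by
                  refine max_le ?_ ?_
                  · calc rad (a * (c - sharp y)) ≤ rad a * rad (c - sharp y) :=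
                          rad_mul_le hdK hbR _ _
                      _ ≤ 1 * ‖ϖ‖ := mul_le_mul ha2.le ((rad_le_norm _).trans hy)
                          (rad_nonneg _) zero_le_one
                      _ = ‖ϖ‖ := one_mul _
                  · calc rad (sharp y * (a - sharp x)) ≤ rad (sharp y) * rad (a - sharp x) :=
                          rad_mul_le hdK hbR _ _
                      _ ≤ 1 * ‖ϖ‖ := mul_le_mul (by rw [hcy]; exact hc2.le)
                          ((rad_le_norm _).trans hx) (rad_nonneg _) zero_le_one
                      _ = ‖ϖ‖ := one_mul _
          have hprod : rad (sharp x * sharp y) = rad a * rad c := by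
            rw [← map_mul, hradsharp, hmb, ← hax, ← hcy, hradsharp, hradsharp]
          have hgt : ‖ϖ‖ < rad a * rad c := by
            calc ‖ϖ‖ = Real.sqrt ‖ϖ‖ * Real.sqrt ‖ϖ‖ := hsqsq.symm
              _ < rad a * rad c :=
                mul_lt_mul ha1 hc1.le hsq0 (le_trans hsq0.le ha1.le)
          refine le_antisymm ?_ ?_
          · have hid : a * c = sharp x * sharp y + (a * c - sharp x * sharp y) := by ring
            calc rad (a * c) = rad (sharp x * sharp y + (a * c - sharp x * sharp y)) := by
                  rw [← hid]
              _ ≤ max (rad (sharp x * sharp y)) (rad (a * c - sharp x * sharp y)) :=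
                  rad_add_le_max hdK hbR _ _
              _ ≤ max (rad a * rad c) ‖ϖ‖ := max_le_max hprod.le hmain
              _ = rad a * rad c := max_eq_left hgt.le
          · have hid : sharp x * sharp y = a * c + -(a * c - sharp x * sharp y) := by ring
            have h'' : rad a * rad c ≤ max (rad (a * c)) ‖ϖ‖ := by
              calc rad a * rad c = rad (sharp x * sharp y) := hprod.symm
                _ = rad (a * c + -(a * c - sharp x * sharp y)) := by rw [← hid]
                _ ≤ max (rad (a * c)) (rad (-(a * c - sharp x * sharp y))) :=
                    rad_add_le_max hdK hbR _ _
                _ ≤ max (rad (a * c)) ‖ϖ‖ := by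
                    rw [rad_neg]; exact max_le_max le_rfl hmain
            by_contra hco
            push_neg at hco
            have := max_lt hco hgt
            linarith
        intro a c
        rcases eq_or_ne a 0 with rfl | ha0
        · simp [rad_zero]
        rcases eq_or_ne c 0 with rfl | hc0
        · simp [rad_zero]
        have hra : 0 < rad a :=
          (rad_nonneg a).lt_of_ne fun h => ha0 (eq_zero_of_rad_eq_zero K hbR h.symm)
        have hrc : 0 < rad c :=
          (rad_nonneg c).lt_of_ne fun h => hc0 (eq_zero_of_rad_eq_zero K hbR h.symm)
        obtain ⟨σ, hσ0, hσ1, hσ2⟩ := hdK (Real.sqrt ‖ϖ‖ / rad a) (1 / rad a)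
          (div_pos hsq0 hra) ((div_lt_div_iff_of_pos_right hra).mpr hsq1)
        obtain ⟨τ, hτ0, hτ1, hτ2⟩ := hdK (Real.sqrt ‖ϖ‖ / rad c) (1 / rad c)
          (div_pos hsq0 hrc) ((div_lt_div_iff_of_pos_right hrc).mpr hsq1)
        have hA1 : Real.sqrt ‖ϖ‖ < rad (algebraMap K R σ * a) := by
          rw [rad_smul]; exact (div_lt_iff₀ hra).mp hσ1
        have hA2 : rad (algebraMap K R σ * a) < 1 := by
          rw [rad_smul]; exact (lt_div_iff₀ hra).mp hσ2
        have hC1 : Real.sqrt ‖ϖ‖ < rad (algebraMap K R τ * c) := by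
          rw [rad_smul]; exact (div_lt_iff₀ hrc).mp hτ1
        have hC2 : rad (algebraMap K R τ * c) < 1 := by
          rw [rad_smul]; exact (lt_div_iff₀ hrc).mp hτ2
        have hkey := hcore _ _ hA1 hA2 hC1 hC2
        have hid : algebraMap K R σ * a * (algebraMap K R τ * c)
            = algebraMap K R (σ * τ) * (a * c) := by rw [map_mul]; ring
        rw [hid, rad_smul, rad_smul, rad_smul, norm_mul] at hkey
        have hσn : 0 < ‖σ‖ := norm_pos_iff.mpr hσ0
        have hτn : 0 < ‖τ‖ := norm_pos_iff.mpr hτ0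
        have h2 : (‖σ‖ * ‖τ‖) * rad (a * c) = (‖σ‖ * ‖τ‖) * (rad a * rad c) := by
          linear_combination hkey
        exact mul_left_cancel₀ (by positivity) h2
      refine ⟨?_, fun x y => by rw [hsR, hsR, hsR]; exact hmR x y⟩
      refine ⟨⟨0, 1, fun h => h1R h.symm⟩, mul_comm, ?_⟩
      intro a ha0
      have hra : 0 < rad a :=
        (rad_nonneg a).lt_of_ne fun h => ha0 (eq_zero_of_rad_eq_zero K hbR h.symm)
      obtain ⟨σ, hσ0, hσ1, hσ2⟩ := hdK (‖ϖ‖ / rad a) (1 / rad a) (div_pos hϖpos hra)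
        ((div_lt_div_iff_of_pos_right hra).mpr hϖ1)
      set a' := algebraMap K R σ * a with ha'
      have hra' : rad a' = ‖σ‖ * rad a := rad_smul σ a
      have ha'1 : rad a' < 1 := by rw [hra']; exact (lt_div_iff₀ hra).mp hσ2
      have ha'ϖ : ‖ϖ‖ < rad a' := by rw [hra']; exact (div_lt_iff₀ hra).mp hσ1
      have hposa' : 0 < rad a' := lt_trans hϖpos ha'ϖ
      obtain ⟨x, hx⟩ := hsurj a' (powerBounded_of_rad_lt_one ha'1)
      have hax : rad (sharp x) = rad a' := hnear a' x hx ha'ϖ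
      have hx0 : x ≠ 0 := by
        intro h
        rw [h, map_zero, rad_zero] at hax
        linarith
      obtain ⟨xi, hxi⟩ := hfb.mul_inv_cancel hx0
      have hXI : sharp x * sharp xi = 1 := by rw [← map_mul, hxi, map_one]
      have hxirad : rad (sharp xi) = (rad a')⁻¹ := by
        have h' : rad (sharp x) * rad (sharp xi) = 1 := by rw [← hmR, hXI, hone]
        rw [hax] at h'
        exact mul_left_cancel₀ hposa'.ne' (by rw [h', mul_inv_cancel₀ hposa'.ne'])
      have hglt : rad (1 - a' * sharp xi) < 1 := by
        have hid : 1 - a' * sharp xi = -((a' - sharp x) * sharp xi) := by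
          linear_combination -hXI
        rw [hid, rad_neg]
        calc rad ((a' - sharp x) * sharp xi) ≤ rad (a' - sharp x) * rad (sharp xi) :=
              rad_mul_le hdK hbR _ _
          _ ≤ ‖ϖ‖ * (rad a')⁻¹ := by
              rw [hxirad]
              exact mul_le_mul_of_nonneg_right ((rad_le_norm _).trans hx) (by positivity)
          _ < rad a' * (rad a')⁻¹ := mul_lt_mul_of_pos_right ha'ϖ (inv_pos.mpr hposa')
          _ = 1 := mul_inv_cancel₀ hposa'.ne'
      have hu' : IsUnit a' := isUnit_of_mul_isUnit_left (isUnit_of_rad_lt_one hglt)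
      rw [ha'] at hu'
      obtain ⟨v, hv⟩ := (isUnit_of_mul_isUnit_right hu').exists_right_inv
      exact ⟨v, hv⟩
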